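/- The skew-dissipative representable set equals the dissipative cone: for g ≠ 0 in ℝⁿ, { (S - K) g : Sᵀ = -S, K positive semidefinite } = { r : ⟨g, r⟩ ≤ 0 }. -/

import Mathlib

open Matrix RealInnerProductSpace

lemma dotProduct_self_nonneg' {n : ℕ} (v : Fin n → ℝ) : 0 ≤ v ⬝ᵥ v :=
  Finset.sum_nonneg fun i _ => mul_self_nonneg (v i)

lemma vecMulVec_mulVec' {n : ℕ} (w v u : Fin n → ℝ) :
    (Matrix.vecMulVec w v) *ᵥ u = (v ⬝ᵥ u) • w := by
  funext i
  simp only [Matrix.mulVec, dotProduct, Matrix.vecMulVec_apply, Pi.smul_apply,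
    smul_eq_mul, Finset.sum_mul]
  exact Finset.sum_congr rfl fun j _ => by ring

theorem representable_set_eq_dissipative_cone (n : ℕ) (g : Fin n → ℝ) (hg : g ≠ 0) :
    {r : Fin n → ℝ | ∃ S K : Matrix (Fin n) (Fin n) ℝ,
        Sᵀ = -S ∧ Kᵀ = K ∧ (∀ v : Fin n → ℝ, 0 ≤ v ⬝ᵥ (K *ᵥ v)) ∧
        r = (S - K) *ᵥ g}
      = {r : Fin n → ℝ | g ⬝ᵥ r ≤ 0} := by
  have hgg : (0:ℝ) < g ⬝ᵥ g := by
    rcases lt_or_eq_of_le (dotProduct_self_nonneg' g) with h | h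
    · exact h
    · exact absurd ((dotProduct_self_eq_zero).1 h.symm) hg
  ext r
  simp only [Set.mem_setOf_eq]
  constructor
  · rintro ⟨S, K, hS, hK, hKpsd, rfl⟩
    have hskew : g ⬝ᵥ (S *ᵥ g) = 0 := by
      have h1 : g ⬝ᵥ (S *ᵥ g) = -(g ⬝ᵥ (S *ᵥ g)) := by
        conv_lhs => rw [Matrix.dotProduct_mulVec, ← Matrix.mulVec_transpose, hS,
          Matrix.neg_mulVec, neg_dotProduct, dotProduct_comm]
      linarith
    have h2 : g ⬝ᵥ ((S - K) *ᵥ g) = g ⬝ᵥ (S *ᵥ g) - g ⬝ᵥ (K *ᵥ g) := by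
      rw [Matrix.sub_mulVec, dotProduct_sub]
    rw [h2, hskew]
    have := hKpsd g
    linarith
  · intro hr
    set a : ℝ := g ⬝ᵥ r with ha
    set c : ℝ := (g ⬝ᵥ g)⁻¹ with hc
    set p : Fin n → ℝ := r - (a * c) • g with hp
    have hpg : g ⬝ᵥ p = 0 := by
      simp only [hp, dotProduct_sub, dotProduct_smul, smul_eq_mul]
      rw [hc, mul_assoc, inv_mul_cancel₀ (ne_of_gt hgg), mul_one, ha, sub_self]
    refine ⟨c • (Matrix.vecMulVec p g - Matrix.vecMulVec g p),
      (-(a * c)) • (1 : Matrix (Fin n) (Fin n) ℝ), ?_, ?_, ?_, ?_⟩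
    · ext i j
      simp [Matrix.vecMulVec_apply, Matrix.transpose_apply]
      ring
    · simp [Matrix.transpose_smul]
    · intro v
      have hac : 0 ≤ -(a * c) := by
        have h0 : 0 ≤ c := le_of_lt (by positivity)
        nlinarith
      simp only [Matrix.smul_mulVec, Matrix.one_mulVec, dotProduct_smul,
        smul_eq_mul]
      exact mul_nonneg hac (dotProduct_self_nonneg' v)
    · have hSg : (c • (Matrix.vecMulVec p g - Matrix.vecMulVec g p)) *ᵥ g = p := by
        rw [Matrix.smul_mulVec, Matrix.sub_mulVec, vecMulVec_mulVec',
          vecMulVec_mulVec']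
        have hgp : p ⬝ᵥ g = 0 := by rw [dotProduct_comm]; exact hpg
        rw [hgp, zero_smul, sub_zero, smul_smul, hc,
          inv_mul_cancel₀ (ne_of_gt hgg), one_smul]
      have hKg : ((-(a * c)) • (1 : Matrix (Fin n) (Fin n) ℝ)) *ᵥ g = (-(a * c)) • g := by
        simp [Matrix.neg_mulVec, Matrix.smul_mulVec]
      rw [Matrix.sub_mulVec, hSg, hKg, hp]
      funext i
      simp
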